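/- There exist constants c₁, c₂ > 0 such that for every real ε with 0 < ε < 1/3 and every integer n ≥ 1 the following holds: if σ₁, …, σₙ are i.i.d. random variables uniform on {+1,−1} and Sₙ = σ₁ + ⋯ + σₙ, then P(Sₙ ≥ (ε+ε²)·n | Sₙ ≥ ε·n) ≥ (c₁/n)·e^{−c₂ ε³ n}. -/

import Mathlib

open scoped Classical

/-- The sum S_n = σ₁ + ⋯ + σₙ of n i.i.d. uniform ±1 spins, as a function of the
    (uniformly distributed) configuration σ : Fin n → Bool. -/
def spinSum (n : ℕ) (σ : Fin n → Bool) : ℝ := ∑ i, (if σ i then (1 : ℝ) else -1)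

def tc (n : ℕ) (σ : Fin n → Bool) : ℕ := (Finset.univ.filter (fun i => σ i = true)).card
def fc (n : ℕ) (σ : Fin n → Bool) : ℕ := (Finset.univ.filter (fun i => σ i = false)).card

lemma tc_add_fc (n : ℕ) (σ : Fin n → Bool) : tc n σ + fc n σ = n := by
  classical
  have h := Finset.card_filter_add_card_filter_not
    (s := (Finset.univ : Finset (Fin n))) (p := fun i => σ i = true)
  simpa [tc, fc, Finset.card_univ] using h

lemma spinSum_eq (n : ℕ) (σ : Fin n → Bool) : spinSum n σ = 2 * (tc n σ : ℝ) - n := by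
  classical
  have h : ∀ i : Fin n, (if σ i then (1:ℝ) else -1) = (if σ i = true then (2:ℝ) else 0) - 1 := by
    intro i; cases σ i <;> norm_num
  unfold spinSum
  rw [Finset.sum_congr rfl (fun i _ => h i), Finset.sum_sub_distrib, ← Finset.sum_filter]
  simp [tc, Finset.card_univ, mul_comm]

lemma fc_eq (n : ℕ) (σ : Fin n → Bool) : (fc n σ : ℝ) = n - tc n σ := by
  have h := tc_add_fc n σ
  have h' : (tc n σ : ℝ) + fc n σ = n := by exact_mod_cast h
  linarith

def flipF (n : ℕ) (σ : Fin n → Bool) (T : Finset (Fin n)) : Fin n → Bool :=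
  fun i => if i ∈ T then true else σ i

lemma spinSum_flipF (n : ℕ) (σ : Fin n → Bool) (T : Finset (Fin n))
    (hT : ∀ i ∈ T, σ i = false) :
    spinSum n (flipF n σ T) = spinSum n σ + 2 * T.card := by
  classical
  have h : ∀ i : Fin n, (if flipF n σ T i then (1:ℝ) else -1)
      = (if σ i then (1:ℝ) else -1) + (if i ∈ T then (2:ℝ) else 0) := by
    intro i
    by_cases hi : i ∈ T
    · simp [flipF, hi, hT i hi]; norm_num
    · simp [flipF, hi]
  unfold spinSum
  rw [Finset.sum_congr rfl (fun i _ => h i), Finset.sum_add_distrib, ← Finset.sum_filter,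
    Finset.filter_univ_mem]
  simp [mul_comm]

lemma tc_flipF (n : ℕ) (σ : Fin n → Bool) (T : Finset (Fin n))
    (hT : ∀ i ∈ T, σ i = false) :
    tc n (flipF n σ T) = tc n σ + T.card := by
  have h1 := spinSum_flipF n σ T hT
  rw [spinSum_eq, spinSum_eq] at h1
  have : (tc n (flipF n σ T) : ℝ) = tc n σ + T.card := by linarith
  exact_mod_cast this

lemma flipF_inj (n : ℕ) (σ σ' : Fin n → Bool) (T : Finset (Fin n))
    (hT : ∀ i ∈ T, σ i = false) (hT' : ∀ i ∈ T, σ' i = false)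
    (h : flipF n σ T = flipF n σ' T) : σ = σ' := by
  funext i
  by_cases hi : i ∈ T
  · rw [hT i hi, hT' i hi]
  · have := congrFun h i
    simpa [flipF, hi] using this

lemma choose_ratio (P m : ℕ) (r : ℝ) (hr : 0 ≤ r) :
    ∀ d : ℕ, d ≤ m → d ≤ P → (∀ i : ℕ, i < d → (P : ℝ) - i ≤ r * ((m : ℝ) - i)) →
    (P.choose d : ℝ) ≤ r ^ d * (m.choose d) := by
  intro d
  induction d with
  | zero => intro _ _ _; simp
  | succ k ih =>
    intro hm hP hi
    have hkm : k ≤ m := Nat.le_of_succ_le hm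
    have hkP : k ≤ P := Nat.le_of_succ_le hP
    have hrec := ih hkm hkP (fun i hik => hi i (Nat.lt_succ_of_lt hik))
    have h1 : (P.choose (k+1) : ℝ) * (k+1) = (P.choose k : ℝ) * ((P : ℝ) - k) := by
      have h := Nat.choose_succ_right_eq P k
      have h' := congrArg (fun x : ℕ => (x : ℝ)) h
      push_cast [Nat.cast_sub hkP] at h'
      linarith [h']
    have h2 : (m.choose (k+1) : ℝ) * (k+1) = (m.choose k : ℝ) * ((m : ℝ) - k) := by
      have h := Nat.choose_succ_right_eq m k
      have h' := congrArg (fun x : ℕ => (x : ℝ)) h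
      push_cast [Nat.cast_sub hkm] at h'
      linarith [h']
    have hk1 : (0:ℝ) < (k:ℝ) + 1 := by positivity
    rw [← mul_le_mul_iff_of_pos_right hk1, h1]
    have heq : r ^ (k+1) * ((m.choose (k+1) : ℝ)) * ((k:ℝ)+1)
        = r ^ k * ((m.choose k : ℝ) * ((m:ℝ) - k)) * r := by
      rw [mul_assoc (r ^ (k+1)), h2]; ring
    rw [heq]
    have hPk : (0:ℝ) ≤ (P:ℝ) - k := by
      have : (k:ℝ) ≤ P := by exact_mod_cast hkP
      linarith
    calc (P.choose k : ℝ) * ((P:ℝ) - k) ≤ (r ^ k * m.choose k) * ((P:ℝ) - k) :=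
          mul_le_mul_of_nonneg_right hrec hPk
      _ ≤ (r ^ k * m.choose k) * (r * ((m:ℝ) - k)) := by
          apply mul_le_mul_of_nonneg_left (hi k (Nat.lt_succ_self k))
          positivity
      _ = r ^ k * ((m.choose k : ℝ) * ((m:ℝ) - k)) * r := by ring

set_option maxHeartbeats 2000000 in
theorem stmt1 : ∃ c₁ c₂ : ℝ, 0 < c₁ ∧ 0 < c₂ ∧ ∀ ε : ℝ, 0 < ε → ε < 1/3 →
    ∀ n : ℕ, 1 ≤ n →
    ((Finset.univ.filter (fun σ : Fin n → Bool =>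
        (ε + ε^2) * n ≤ spinSum n σ ∧ ε * n ≤ spinSum n σ)).card : ℝ) /
      ((Finset.univ.filter (fun σ : Fin n → Bool => ε * n ≤ spinSum n σ)).card : ℝ)
      ≥ (c₁ / n) * Real.exp (-(c₂ * ε^3 * n)) := by
  refine ⟨Real.exp (-21), 10, Real.exp_pos _, by norm_num, ?_⟩
  intro ε hε hε3 n hn
  classical
  have hn1 : (1:ℝ) ≤ n := by exact_mod_cast hn
  have hn0 : (0:ℝ) < n := by linarith
  set A := Finset.univ.filter (fun σ : Fin n → Bool => (ε + ε^2) * n ≤ spinSum n σ) with hA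
  set B := Finset.univ.filter (fun σ : Fin n → Bool => ε * n ≤ spinSum n σ) with hB
  have hε2 : ε^2 ≤ 1/9 := by nlinarith
  have hεsq : ε^2 ≤ ε * (1/3) := by nlinarith
  have hee : ε + ε^2 ≤ 4/9 := by nlinarith
  have hnum : (Finset.univ.filter (fun σ : Fin n → Bool =>
      (ε + ε^2) * n ≤ spinSum n σ ∧ ε * n ≤ spinSum n σ)) = A := by
    rw [hA]
    ext σ
    simp only [Finset.mem_filter, Finset.mem_univ, true_and]
    constructor
    · exact And.left
    · intro h
      refine ⟨h, ?_⟩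
      have h2 : 0 ≤ ε^2 * n := by positivity
      nlinarith
  have hAsubB : A ⊆ B := by
    intro σ hσ
    rw [hA, Finset.mem_filter] at hσ
    rw [hB, Finset.mem_filter]
    refine ⟨hσ.1, ?_⟩
    have h2 : 0 ≤ ε^2 * n := by positivity
    nlinarith [hσ.2]
  have hAtrue : (fun _ => true : Fin n → Bool) ∈ A := by
    rw [hA]
    simp only [Finset.mem_filter, Finset.mem_univ, true_and]
    have h1 : spinSum n (fun _ => true) = n := by simp [spinSum]
    rw [h1]
    nlinarith
  have hApos : 0 < A.card := Finset.card_pos.mpr ⟨_, hAtrue⟩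
  have hBpos : 0 < B.card := lt_of_lt_of_le hApos (Finset.card_le_card hAsubB)
  have hApos' : (1:ℝ) ≤ A.card := by exact_mod_cast hApos
  have hBpos' : (0:ℝ) < B.card := by exact_mod_cast hBpos
  rw [hnum, ge_iff_le, le_div_iff₀ hBpos']
  by_cases hsmall : n < 20
  · -- small n
    have hB2 : (B.card : ℝ) ≤ 2 ^ n := by
      have h1 : B.card ≤ (Finset.univ : Finset (Fin n → Bool)).card :=
        Finset.card_le_card (by rw [hB]; exact Finset.filter_subset _ _)
      have h2 : (Finset.univ : Finset (Fin n → Bool)).card = 2 ^ n := by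
        simp [Finset.card_univ]
      rw [h2] at h1
      exact_mod_cast h1
    have h2e : (2:ℝ) ≤ Real.exp 1 := by
      have := Real.add_one_le_exp 1; linarith
    have h2n : (2:ℝ)^n ≤ Real.exp 20 := by
      calc (2:ℝ)^n ≤ 2^20 := pow_le_pow_right₀ (by norm_num) (by omega)
        _ ≤ Real.exp 1 ^ 20 := pow_le_pow_left₀ (by norm_num) h2e 20
        _ = Real.exp 20 := by rw [← Real.exp_nat_mul]; norm_num
    have e1 : Real.exp (-21)/(n:ℝ) ≤ Real.exp (-21) := div_le_self (Real.exp_pos _).le hn1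
    have e2 : Real.exp (-(10*ε^3*(n:ℝ))) ≤ 1 := by
      rw [show (1:ℝ) = Real.exp 0 by rw [Real.exp_zero]]
      apply Real.exp_le_exp.mpr
      have : 0 ≤ 10*ε^3*(n:ℝ) := by positivity
      linarith
    have key : Real.exp (-21)/(n:ℝ) * Real.exp (-(10*ε^3*(n:ℝ))) * B.card ≤ 1 := by
      calc Real.exp (-21)/(n:ℝ) * Real.exp (-(10*ε^3*(n:ℝ))) * B.card
          ≤ (Real.exp (-21) * 1) * (2^n) := by
            apply mul_le_mul _ hB2 hBpos'.le (by positivity)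
            exact mul_le_mul e1 e2 (Real.exp_pos _).le (Real.exp_pos _).le
        _ ≤ Real.exp (-21) * Real.exp 20 := by
            rw [mul_one]
            exact mul_le_mul_of_nonneg_left h2n (Real.exp_pos _).le
        _ = Real.exp (-1) := by rw [← Real.exp_add]; norm_num
        _ ≤ 1 := by
            rw [show (1:ℝ) = Real.exp 0 by rw [Real.exp_zero]]
            apply Real.exp_le_exp.mpr; norm_num
    linarith
  · -- large n
    push_neg at hsmall
    have hn20 : (20:ℝ) ≤ n := by exact_mod_cast hsmall
    set d : ℕ := ⌈ε^2 * n / 2⌉₊ with hd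
    set m : ℕ := ⌈(1 - (ε + ε^2)) * n / 2⌉₊ with hm
    set P : ℕ := ⌊(1 + (ε + ε^2)) * n / 2⌋₊ + d with hP
    have hd1 : ε^2*n/2 ≤ (d:ℝ) := Nat.le_ceil _
    have hd2 : (d:ℝ) ≤ ε^2*n/2 + 1 := by
      rw [hd]
      exact (Nat.ceil_lt_add_one (by positivity)).le
    have hm1 : (1 - (ε+ε^2))*n/2 ≤ (m:ℝ) := Nat.le_ceil _
    have hP1 : (P:ℝ) ≤ (1 + (ε+ε^2))*n/2 + d := by
      have hfl := Nat.floor_le (show (0:ℝ) ≤ (1 + (ε+ε^2))*n/2 by positivity)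
      rw [hP]
      push_cast
      linarith
    have hdm : d < m := by
      have hcast : (d:ℝ) < (m:ℝ) := by nlinarith
      exact_mod_cast hcast
    have hmd : (0:ℝ) < (m:ℝ) - d := by
      have : (d:ℝ) < m := by exact_mod_cast hdm
      linarith
    have hmd6 : (n:ℝ)/6 ≤ (m:ℝ) - d := by nlinarith
    -- double counting
    have hBAprop : ∀ σ ∈ B \ A, ε*n ≤ spinSum n σ ∧ spinSum n σ < (ε+ε^2)*n := by
      intro σ hσ
      rw [Finset.mem_sdiff] at hσ
      obtain ⟨hσB, hσA⟩ := hσ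
      rw [hB, Finset.mem_filter] at hσB
      refine ⟨hσB.2, ?_⟩
      by_contra hcon
      push_neg at hcon
      exact hσA (by rw [hA, Finset.mem_filter]; exact ⟨Finset.mem_univ _, hcon⟩)
    have hfcm : ∀ σ ∈ B \ A, m ≤ (Finset.univ.filter (fun i => σ i = false)).card := by
      intro σ hσ
      obtain ⟨hge, hlt⟩ := hBAprop σ hσ
      rw [hm, Nat.ceil_le]
      have hfceq : ((Finset.univ.filter (fun i => σ i = false)).card : ℝ) = n - tc n σ :=
        fc_eq n σ
      rw [hfceq]
      have hS := spinSum_eq n σ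
      linarith
    set Astar := A.filter (fun τ => tc n τ ≤ P) with hAstar
    set S₁ := (B \ A).sigma
      (fun σ => (Finset.univ.filter (fun i => σ i = false)).powersetCard d) with hS₁
    set S₂ := Astar.sigma
      (fun τ => (Finset.univ.filter (fun i => τ i = true)).powersetCard d) with hS₂
    have hc1 : (B \ A).card * m.choose d ≤ S₁.card := by
      rw [hS₁, Finset.card_sigma]
      calc (B \ A).card * m.choose d = ∑ _σ ∈ B \ A, m.choose d := by
            rw [Finset.sum_const, smul_eq_mul]
        _ ≤ ∑ σ ∈ B \ A, ((Finset.univ.filter (fun i => σ i = false)).powersetCard d).card := by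
            apply Finset.sum_le_sum
            intro σ hσ
            rw [Finset.card_powersetCard]
            exact Nat.choose_le_choose d (hfcm σ hσ)
    have hc2 : S₁.card ≤ S₂.card := by
      apply Finset.card_le_card_of_injOn
        (fun p => ⟨flipF n p.1 p.2, p.2⟩)
      · intro p hp
        rw [hS₁, Finset.mem_coe, Finset.mem_sigma] at hp
        obtain ⟨hp1, hp2⟩ := hp
        rw [Finset.mem_powersetCard] at hp2
        obtain ⟨hpsub, hpcard⟩ := hp2
        have hTfalse : ∀ i ∈ p.2, p.1 i = false := by
          intro i hi
          have := hpsub hi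
          simpa using this
        obtain ⟨hge, hlt⟩ := hBAprop p.1 hp1
        have hflipS := spinSum_flipF n p.1 p.2 hTfalse
        rw [hS₂, Finset.mem_coe, Finset.mem_sigma]
        constructor
        · rw [hAstar, Finset.mem_filter]
          constructor
          · rw [hA, Finset.mem_filter]
            refine ⟨Finset.mem_univ _, ?_⟩
            rw [hflipS, hpcard]
            have : ε^2 * n ≤ 2*(d:ℝ) := by linarith
            nlinarith
          · rw [tc_flipF n p.1 p.2 hTfalse, hpcard, hP]
            apply Nat.add_le_add_right
            apply Nat.le_floor
            have hS := spinSum_eq n p.1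
            push_cast
            linarith
        · rw [Finset.mem_powersetCard]
          refine ⟨?_, hpcard⟩
          intro i hi
          simp only [Finset.mem_filter, Finset.mem_univ, true_and]
          simp [flipF, hi]
      · intro p hp q hq hpq
        simp only [Finset.mem_coe] at hp hq
        rw [hS₁, Finset.mem_sigma] at hp hq
        obtain ⟨hp1, hp2⟩ := hp
        obtain ⟨hq1, hq2⟩ := hq
        rw [Finset.mem_powersetCard] at hp2 hq2
        have hTp : ∀ i ∈ p.2, p.1 i = false := by
          intro i hi; have := hp2.1 hi; simpa using this
        have hTq : ∀ i ∈ q.2, q.1 i = false := by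
          intro i hi; have := hq2.1 hi; simpa using this
        have h2 : p.2 = q.2 := by
          have := congrArg (fun x : (Σ _ : (Fin n → Bool), Finset (Fin n)) => x.2) hpq
          simpa using this
        have h1 : flipF n p.1 p.2 = flipF n q.1 q.2 := by
          have := congrArg (fun x : (Σ _ : (Fin n → Bool), Finset (Fin n)) => x.1) hpq
          simpa using this
        rw [← h2] at h1
        have hTq' : ∀ i ∈ p.2, q.1 i = false := by
          intro i hi; exact hTq i (h2 ▸ hi)
        have hfst : p.1 = q.1 := flipF_inj n p.1 q.1 p.2 hTp hTq' h1
        exact Sigma.ext hfst (heq_of_eq h2)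
    have hc3 : S₂.card ≤ A.card * P.choose d := by
      rw [hS₂, Finset.card_sigma]
      calc ∑ τ ∈ Astar, ((Finset.univ.filter (fun i => τ i = true)).powersetCard d).card
          ≤ ∑ _τ ∈ Astar, P.choose d := by
            apply Finset.sum_le_sum
            intro τ hτ
            rw [Finset.card_powersetCard]
            apply Nat.choose_le_choose
            rw [hAstar, Finset.mem_filter] at hτ
            exact hτ.2
        _ = Astar.card * P.choose d := by rw [Finset.sum_const, smul_eq_mul]
        _ ≤ A.card * P.choose d := by
            apply Nat.mul_le_mul_right
            apply Finset.card_le_card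
            rw [hAstar]
            exact Finset.filter_subset _ _
    have hcount : (B \ A).card * m.choose d ≤ A.card * P.choose d :=
      le_trans (le_trans hc1 hc2) hc3
    -- real estimates
    set r : ℝ := (P:ℝ)/((m:ℝ) - d) with hr
    have hr0 : (0:ℝ) ≤ r := div_nonneg (Nat.cast_nonneg P) hmd.le
    have hdP : d ≤ P := by rw [hP]; exact Nat.le_add_left d _
    have hratio : (P.choose d : ℝ) ≤ r^d * m.choose d := by
      apply choose_ratio P m r hr0 d hdm.le hdP
      intro i hi
      have hi' : (i:ℝ) ≤ (d:ℝ) := by exact_mod_cast hi.le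
      have h2 : r * ((m:ℝ) - d) = P := div_mul_cancel₀ _ (ne_of_gt hmd)
      have h3 : r * ((m:ℝ)-d) ≤ r * ((m:ℝ)-i) :=
        mul_le_mul_of_nonneg_left (by linarith) hr0
      have h4 : (0:ℝ) ≤ (i:ℝ) := Nat.cast_nonneg i
      linarith
    have hPmd : (P:ℝ) - m + d ≤ 2*ε*n + 2 := by nlinarith
    have hX : (d:ℝ) * ((P:ℝ) - m + d) ≤ (10*ε^3*n + 9) * ((m:ℝ) - d) := by
      have hA1 : (d:ℝ) * ((P:ℝ) - m + d) ≤ (d:ℝ) * (2*ε*n+2) :=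
        mul_le_mul_of_nonneg_left hPmd (Nat.cast_nonneg d)
      have hA2 : (d:ℝ) * (2*ε*n+2) ≤ (ε^2*n/2+1)*(2*ε*n+2) :=
        mul_le_mul_of_nonneg_right hd2 (by positivity)
      have hA3 : (ε^2*n/2+1)*(2*ε*n+2) ≤ (5/3)*ε^3*n^2 + (3/2)*n := by
        have hexp : (ε^2*n/2+1)*(2*ε*n+2) = ε^3*(n:ℝ)^2 + ε^2*n + 2*(ε*n) + 2 := by ring
        have ha : ε^2*(n:ℝ) ≤ (1/9)*n := by nlinarith
        have hb : ε*(n:ℝ) ≤ (1/3)*n := by nlinarith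
        have h5 : (0:ℝ) ≤ ε^3*(n:ℝ)^2 := by positivity
        rw [hexp]
        linarith
      have hA4 : (5/3)*ε^3*n^2 + (3/2)*n ≤ (10*ε^3*n + 9)*((m:ℝ)-d) := by
        have h0 : (0:ℝ) ≤ 10*ε^3*n + 9 := by positivity
        nlinarith [mul_le_mul_of_nonneg_left hmd6 h0]
      linarith
    have hdr : (d:ℝ) * (r - 1) ≤ 10*ε^3*n + 9 := by
      rw [hr]
      have heq1 : (P:ℝ)/((m:ℝ)-d) - 1 = ((P:ℝ) - m + d)/((m:ℝ)-d) := by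
        rw [eq_div_iff (ne_of_gt hmd), sub_mul, div_mul_cancel₀ _ (ne_of_gt hmd)]
        ring
      rw [heq1, ← mul_div_assoc, div_le_iff₀ hmd]
      linarith
    have hrd : r^d ≤ Real.exp (10*ε^3*n + 9) := by
      have h1 : r ≤ Real.exp (r - 1) := by
        have := Real.add_one_le_exp (r-1); linarith
      calc r^d ≤ (Real.exp (r-1))^d := pow_le_pow_left₀ hr0 h1 d
        _ = Real.exp ((d:ℝ)*(r-1)) := by rw [← Real.exp_nat_mul]
        _ ≤ _ := Real.exp_le_exp.mpr hdr
    have hchoosem' : (0:ℝ) < (m.choose d : ℝ) := by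
      exact_mod_cast Nat.choose_pos hdm.le
    have hcastc : ((B\A).card : ℝ) * (m.choose d : ℝ) ≤ (A.card : ℝ) * (P.choose d : ℝ) := by
      exact_mod_cast hcount
    have hXY : ((B\A).card : ℝ) ≤ (A.card:ℝ) * Real.exp (10*ε^3*n + 9) := by
      rw [← mul_le_mul_iff_of_pos_right hchoosem']
      calc ((B\A).card:ℝ) * (m.choose d : ℝ) ≤ (A.card:ℝ) * (P.choose d : ℝ) := hcastc
        _ ≤ (A.card:ℝ) * (r^d * m.choose d) :=
            mul_le_mul_of_nonneg_left hratio (Nat.cast_nonneg _)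
        _ ≤ (A.card:ℝ) * (Real.exp (10*ε^3*n+9) * m.choose d) := by
            apply mul_le_mul_of_nonneg_left _ (Nat.cast_nonneg _)
            exact mul_le_mul_of_nonneg_right hrd hchoosem'.le
        _ = (A.card:ℝ) * Real.exp (10*ε^3*n+9) * (m.choose d : ℝ) := by ring
    have hcardB : ((B).card:ℝ) = ((B\A).card:ℝ) + A.card := by
      rw [← Finset.card_sdiff_add_card_eq_card hAsubB]
      push_cast
      ring
    have hE1 : (1:ℝ) ≤ Real.exp (10*ε^3*n+9) := by
      rw [show (1:ℝ) = Real.exp 0 by rw [Real.exp_zero]]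
      apply Real.exp_le_exp.mpr
      positivity
    have hBE : (B.card:ℝ) ≤ (A.card:ℝ) * (2*Real.exp (10*ε^3*n+9)) := by
      nlinarith
    calc Real.exp (-21)/(n:ℝ) * Real.exp (-(10*ε^3*(n:ℝ))) * B.card
        ≤ Real.exp (-21)/(n:ℝ) * Real.exp (-(10*ε^3*(n:ℝ)))
            * ((A.card:ℝ) * (2*Real.exp (10*ε^3*n+9))) := by
          apply mul_le_mul_of_nonneg_left hBE (by positivity)
      _ = (A.card:ℝ) * (2 * (Real.exp (-21)/(n:ℝ))
            * (Real.exp (-(10*ε^3*(n:ℝ))) * Real.exp (10*ε^3*n+9))) := by ring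
      _ = (A.card:ℝ) * (2 * (Real.exp (-21)/(n:ℝ)) * Real.exp 9) := by
          rw [← Real.exp_add]
          congr 2
          ring
      _ ≤ (A.card:ℝ) * 1 := by
          apply mul_le_mul_of_nonneg_left _ (Nat.cast_nonneg _)
          have h1 : Real.exp (-21)/(n:ℝ) ≤ Real.exp (-21) :=
            div_le_self (Real.exp_pos _).le hn1
          have h2 : Real.exp (-21) * Real.exp 9 = Real.exp (-12) := by
            rw [← Real.exp_add]; norm_num
          have h6 : Real.exp (-12) ≤ Real.exp (-1) := Real.exp_le_exp.mpr (by norm_num)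
          have h2e : (2:ℝ) ≤ Real.exp 1 := by have := Real.add_one_le_exp 1; linarith
          have h5 : Real.exp (-1) ≤ 1/2 := by
            rw [Real.exp_neg]
            calc (Real.exp 1)⁻¹ ≤ (2:ℝ)⁻¹ := inv_anti₀ (by norm_num) h2e
              _ = 1/2 := by norm_num
          have h4 : (0:ℝ) < Real.exp 9 := Real.exp_pos _
          have h7 := mul_le_mul_of_nonneg_right h1 h4.le
          linarith
      _ = (A.card:ℝ) := mul_one _
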